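/- Let f : [a,b] → ℝ be Lipschitz, N ⊆ [a,b] a closed set of Lebesgue measure zero, and suppose (a,b) \ N is the union of countably many disjoint open intervals (aₙ, bₙ). Then f(b) − f(a) = ∑ₙ (f(bₙ) − f(aₙ)). -/

import Mathlib

open MeasureTheory

lemma mono_hasSum (a b : ℝ) (hab : a ≤ b) (g : ℝ → ℝ) (K : NNReal)
    (hg : LipschitzOnWith K g (Set.Icc a b))
    (hmono : MonotoneOn g (Set.Icc a b))
    (N : Set ℝ) (hNsub : N ⊆ Set.Icc a b)
    (hNnull : volume N = 0)
    (c d : ℕ → ℝ) (hcd : ∀ n, c n ≤ d n)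
    (hsub : ∀ n, Set.Ioo (c n) (d n) ⊆ Set.Icc a b)
    (hdisj : Pairwise (Function.onFun Disjoint fun n => Set.Ioo (c n) (d n)))
    (hunion : Set.Ioo a b \ N = ⋃ n, Set.Ioo (c n) (d n)) :
    HasSum (fun n => g (d n) - g (c n)) (g b - g a) := by
  have ha : a ∈ Set.Icc a b := Set.left_mem_Icc.2 hab
  have hb : b ∈ Set.Icc a b := Set.right_mem_Icc.2 hab
  -- endpoints of nondegenerate intervals lie in [a,b]
  have hend : ∀ n, c n < d n → c n ∈ Set.Icc a b ∧ d n ∈ Set.Icc a b := by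
    intro n hn
    have : Set.Icc (c n) (d n) ⊆ Set.Icc a b := by
      rw [← closure_Ioo hn.ne]
      exact closure_minimal (hsub n) isClosed_Icc
    exact ⟨this (Set.left_mem_Icc.2 hn.le), this (Set.right_mem_Icc.2 hn.le)⟩
  have hgcd : ∀ n, g (c n) ≤ g (d n) := by
    intro n
    rcases eq_or_lt_of_le (hcd n) with h | h
    · rw [h]
    · exact hmono (hend n h).1 (hend n h).2 h.le
  have hgab : g a ≤ g b := hmono ha hb hab
  -- the family of image intervals
  set A : ℕ → Set ℝ := fun n => Set.Ioo (g (c n)) (g (d n)) with hA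
  have hAdisj : Pairwise (Function.onFun Disjoint A) := by
    intro m n hmn
    rcases eq_or_lt_of_le (hcd m) with h | hm
    · simp [Function.onFun, hA, h]
    rcases eq_or_lt_of_le (hcd n) with h | hn
    · simp [Function.onFun, hA, h]
    -- the real intervals are ordered
    have horder : d m ≤ c n ∨ d n ≤ c m := by
      by_contra h
      push_neg at h
      have h1 : max (c m) (c n) < min (d m) (d n) := by
        simp only [lt_min_iff, max_lt_iff]
        exact ⟨⟨hm, h.1⟩, ⟨h.2, hn⟩⟩
      obtain ⟨x, hx⟩ := Set.nonempty_Ioo.2 h1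
      simp only [Set.mem_Ioo, max_lt_iff, lt_min_iff] at hx
      exact (Set.disjoint_left.1 (hdisj hmn)) ⟨hx.1.1, hx.2.1⟩ ⟨hx.1.2, hx.2.2⟩
    rcases horder with h | h
    · have hle : g (d m) ≤ g (c n) := hmono (hend m hm).2 (hend n hn).1 h
      rw [Function.onFun, Set.disjoint_left]
      rintro x ⟨_, hx2⟩ ⟨hx3, _⟩
      exact absurd (hx2.trans_le (hle.trans hx3.le)) (lt_irrefl x)
    · have hle : g (d n) ≤ g (c m) := hmono (hend n hn).2 (hend m hm).1 h
      rw [Function.onFun, Set.disjoint_left]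
      rintro x ⟨hx1, _⟩ ⟨_, hx4⟩
      exact absurd (hx4.trans_le (hle.trans hx1.le)) (lt_irrefl x)
  have hvolA : ∀ n, volume (A n) = ENNReal.ofReal (g (d n) - g (c n)) := fun n =>
    Real.volume_Ioo
  have hkey : ∑' n, ENNReal.ofReal (g (d n) - g (c n)) = ENNReal.ofReal (g b - g a) := by
    apply le_antisymm
    · -- upper bound via disjointness
      calc ∑' n, ENNReal.ofReal (g (d n) - g (c n)) = ∑' n, volume (A n) := by
            simp [hvolA]
        _ = volume (⋃ n, A n) :=
            (measure_iUnion hAdisj fun n => measurableSet_Ioo).symm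
        _ ≤ volume (Set.Icc (g a) (g b)) := by
            apply measure_mono
            apply Set.iUnion_subset
            intro n x hx
            rcases eq_or_lt_of_le (hcd n) with h | hn
            · simp [hA, h] at hx
            · have h1 : g a ≤ g (c n) := hmono ha (hend n hn).1 (hend n hn).1.1
              have h2 : g (d n) ≤ g b := hmono (hend n hn).2 hb (hend n hn).2.2
              exact ⟨h1.trans hx.1.le, hx.2.le.trans h2⟩
        _ = ENNReal.ofReal (g b - g a) := Real.volume_Icc
    · -- lower bound via image covering
      have himage : volume (g '' N) = 0 := by
        have h1 := (hg.mono hNsub).hausdorffMeasure_image_le (d := 1) zero_le_one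
        rw [hausdorffMeasure_real, hNnull, mul_zero] at h1
        exact le_antisymm h1 zero_le
      have hcover : Set.Icc a b ⊆ N ∪ ({a, b} : Set ℝ) ∪ ⋃ n, Set.Ioo (c n) (d n) := by
        intro x hx
        by_cases hxa : x = a
        · exact Or.inl (Or.inr (Or.inl hxa))
        by_cases hxb : x = b
        · exact Or.inl (Or.inr (Or.inr hxb))
        have hxIoo : x ∈ Set.Ioo a b := ⟨lt_of_le_of_ne hx.1 (Ne.symm hxa), lt_of_le_of_ne hx.2 hxb⟩
        by_cases hxN : x ∈ N
        · exact Or.inl (Or.inl hxN)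
        · exact Or.inr (hunion ▸ ⟨hxIoo, hxN⟩)
      calc ENNReal.ofReal (g b - g a) = volume (Set.Icc (g a) (g b)) := Real.volume_Icc.symm
        _ ≤ volume (g '' Set.Icc a b) :=
            measure_mono (intermediate_value_Icc hab hg.continuousOn)
        _ ≤ volume (g '' (N ∪ ({a, b} : Set ℝ) ∪ ⋃ n, Set.Ioo (c n) (d n))) :=
            measure_mono (Set.image_mono hcover)
        _ ≤ volume (g '' N) + volume (g '' ({a, b} : Set ℝ))
              + volume (g '' ⋃ n, Set.Ioo (c n) (d n)) := by
            rw [Set.image_union, Set.image_union]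
            exact (measure_union_le _ _).trans (add_le_add (measure_union_le _ _) le_rfl)
        _ = volume (g '' ⋃ n, Set.Ioo (c n) (d n)) := by
            rw [himage, (((Set.finite_singleton b).insert a).image g).measure_zero]
            simp
        _ ≤ ∑' n, volume (g '' Set.Ioo (c n) (d n)) := by
            rw [Set.image_iUnion]; exact measure_iUnion_le _
        _ ≤ ∑' n, ENNReal.ofReal (g (d n) - g (c n)) := by
            apply ENNReal.tsum_le_tsum
            intro n
            rcases eq_or_lt_of_le (hcd n) with h | hn
            · simp [h]
            · have : g '' Set.Ioo (c n) (d n) ⊆ Set.Icc (g (c n)) (g (d n)) := by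
                rintro y ⟨x, hx, rfl⟩
                exact ⟨hmono (hend n hn).1 (hsub n hx) hx.1.le,
                  hmono (hsub n hx) (hend n hn).2 hx.2.le⟩
              calc volume (g '' Set.Ioo (c n) (d n)) ≤ volume (Set.Icc (g (c n)) (g (d n))) :=
                    measure_mono this
                _ = ENNReal.ofReal (g (d n) - g (c n)) := Real.volume_Icc
  -- convert to real HasSum
  have hfin : ∑' n, ENNReal.ofReal (g (d n) - g (c n)) ≠ ⊤ := by
    rw [hkey]; exact ENNReal.ofReal_ne_top
  have hsummable : Summable (fun n => g (d n) - g (c n)) := by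
    have := ENNReal.summable_toReal hfin
    refine this.congr fun n => ?_
    rw [ENNReal.toReal_ofReal (sub_nonneg.2 (hgcd n))]
  have htsum : ∑' n, (g (d n) - g (c n)) = g b - g a := by
    have h2 := ENNReal.tsum_toReal_eq (f := fun n => ENNReal.ofReal (g (d n) - g (c n)))
      (fun n => ENNReal.ofReal_ne_top)
    rw [hkey, ENNReal.toReal_ofReal (sub_nonneg.2 hgab)] at h2
    rw [h2]
    exact tsum_congr fun n => (ENNReal.toReal_ofReal (sub_nonneg.2 (hgcd n))).symm
  rw [← htsum]
  exact hsummable.hasSum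

/-- If `f` is Lipschitz on `[a,b]`, `N ⊆ [a,b]` is closed and Lebesgue null, and
`(a,b) \ N` is the union of countably many pairwise disjoint open intervals `(c n, d n)`,
then `f b - f a = ∑ n, (f (d n) - f (c n))`. -/
theorem stmt0 (a b : ℝ) (hab : a ≤ b) (f : ℝ → ℝ) (K : NNReal)
    (hf : LipschitzOnWith K f (Set.Icc a b))
    (N : Set ℝ) (hNsub : N ⊆ Set.Icc a b) (hNclosed : IsClosed N)
    (hNnull : volume N = 0)
    (c d : ℕ → ℝ) (hcd : ∀ n, c n ≤ d n)
    (hsub : ∀ n, Set.Ioo (c n) (d n) ⊆ Set.Icc a b)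
    (hdisj : Pairwise (Function.onFun Disjoint fun n => Set.Ioo (c n) (d n)))
    (hunion : Set.Ioo a b \ N = ⋃ n, Set.Ioo (c n) (d n)) :
    HasSum (fun n => f (d n) - f (c n)) (f b - f a) := by
  have hdist : ∀ x ∈ Set.Icc a b, ∀ y ∈ Set.Icc a b, |f x - f y| ≤ (K : ℝ) * |x - y| := by
    intro x hx y hy
    have := hf.dist_le_mul x hx y hy
    rwa [Real.dist_eq, Real.dist_eq] at this
  set g : ℝ → ℝ := fun x => f x + K * x with hgdef
  set h : ℝ → ℝ := fun x => K * x - f x with hhdef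
  have hglip : LipschitzOnWith (K + K) g (Set.Icc a b) := by
    apply LipschitzOnWith.of_dist_le_mul
    intro x hx y hy
    have h1 := hdist x hx y hy
    rw [Real.dist_eq, Real.dist_eq, hgdef]
    have : f x + K * x - (f y + K * y) = (f x - f y) + K * (x - y) := by ring
    rw [this]
    calc |(f x - f y) + (K:ℝ) * (x - y)| ≤ |f x - f y| + |(K:ℝ) * (x - y)| := abs_add_le _ _
      _ ≤ (K:ℝ) * |x - y| + (K:ℝ) * |x - y| := by
          refine add_le_add h1 ?_
          rw [abs_mul, abs_of_nonneg (K.coe_nonneg)]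
      _ = ((K + K : NNReal) : ℝ) * |x - y| := by push_cast; ring
  have hhlip : LipschitzOnWith (K + K) h (Set.Icc a b) := by
    apply LipschitzOnWith.of_dist_le_mul
    intro x hx y hy
    have h1 := hdist x hx y hy
    rw [Real.dist_eq, Real.dist_eq, hhdef]
    have : (K:ℝ) * x - f x - ((K:ℝ) * y - f y) = (K:ℝ) * (x - y) - (f x - f y) := by ring
    simp only
    rw [this]
    calc |(K:ℝ) * (x - y) - (f x - f y)| ≤ |(K:ℝ) * (x - y)| + |f x - f y| := abs_sub _ _
      _ ≤ (K:ℝ) * |x - y| + (K:ℝ) * |x - y| := by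
          refine add_le_add ?_ h1
          rw [abs_mul, abs_of_nonneg (K.coe_nonneg)]
      _ = ((K + K : NNReal) : ℝ) * |x - y| := by push_cast; ring
  have hgmono : MonotoneOn g (Set.Icc a b) := by
    intro x hx y hy hxy
    have h1 := hdist x hx y hy
    have h2 : f x - f y ≤ (K:ℝ) * (y - x) := by
      have := (abs_le.1 h1).2
      rwa [abs_of_nonpos (sub_nonpos.2 hxy), neg_sub] at this
    simp only [hgdef]
    nlinarith
  have hhmono : MonotoneOn h (Set.Icc a b) := by
    intro x hx y hy hxy
    have h1 := hdist x hx y hy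
    have h2 : -((K:ℝ) * (y - x)) ≤ f x - f y := by
      have := (abs_le.1 h1).1
      rwa [abs_of_nonpos (sub_nonpos.2 hxy), neg_sub] at this
    simp only [hhdef]
    nlinarith
  have hg := mono_hasSum a b hab g (K + K) hglip hgmono N hNsub hNnull c d hcd hsub hdisj hunion
  have hh := mono_hasSum a b hab h (K + K) hhlip hhmono N hNsub hNnull c d hcd hsub hdisj hunion
  have hsum := (hg.sub hh).div_const 2
  have e1 : (fun n => f (d n) - f (c n))
      = fun i => (g (d i) - g (c i) - (h (d i) - h (c i))) / 2 := by
    funext i; simp only [hgdef, hhdef]; ring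
  have e2 : f b - f a = (g b - g a - (h b - h a)) / 2 := by
    simp only [hgdef, hhdef]; ring
  rw [e1, e2]; exact hsum
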